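/- Let f : ℝ → ℝ admit an entire complex extension with Taylor coefficients c_k = f^{(k)}(0)/k!, let m ≥ 1 be an integer, 0 < ν < 1 and a > 0. Then the limit as ε → 0⁺ of [∫_ε^a f(x) x^{-m-ν} dx − Σ_{k=0}^{m-1} c_k ε^{k+1-m-ν}/(m+ν-k-1)] exists and equals Σ_{k=0}^{∞} c_k a^{k+1-m-ν}/(k+1-m-ν), where the infinite series converges. -/

import Mathlib

open Filter MeasureTheory Set

set_option maxHeartbeats 2000000 in
/-- Finite part of `∫_0^a f(x)/x^{m+ν} dx`, `0 < ν < 1`, for `f` with entire complex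
extension: the regularized limit exists and equals `Σ_{k=0}^∞ c_k a^{k+1-m-ν}/(k+1-m-ν)`. -/
theorem stmt_2 (f : ℝ → ℝ) (F : ℂ → ℂ) (c : ℕ → ℝ)
    (hF : Differentiable ℂ F) (hFf : ∀ x : ℝ, F x = f x)
    (hc : ∀ k, (c k : ℂ) = iteratedDeriv k F 0 / (Nat.factorial k))
    (m : ℕ) (hm : 1 ≤ m) (ν : ℝ) (hν0 : 0 < ν) (hν1 : ν < 1) (a : ℝ) (ha : 0 < a) :
    ∃ S : ℝ,
      HasSum (fun k : ℕ => c k * a ^ ((k : ℝ) + 1 - m - ν) / ((k : ℝ) + 1 - m - ν)) S ∧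
      Tendsto
        (fun ε : ℝ =>
          (∫ x in ε..a, f x / x ^ ((m : ℝ) + ν)) -
            ∑ k ∈ Finset.range m,
              c k * ε ^ ((k : ℝ) + 1 - m - ν) / ((m : ℝ) + ν - k - 1))
        (nhdsWithin 0 (Set.Ioi 0)) (nhds S) := by
  -- Taylor series of f on ℝ
  have hsum : ∀ x : ℝ, HasSum (fun k : ℕ => c k * x ^ k) (f x) := by
    intro x
    have H := Complex.hasSum_taylorSeries_of_entire hF 0 (x : ℂ)
    rw [hFf x] at H
    rw [← Complex.hasSum_ofReal]
    convert H using 2 with k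
    case e'_3 => rfl
    have hk : ((Nat.factorial k : ℂ)) ≠ 0 := by
      exact_mod_cast Nat.cast_ne_zero.mpr (Nat.factorial_ne_zero k)
    have hck : iteratedDeriv k F 0 = (c k : ℂ) * (Nat.factorial k : ℂ) := by
      rw [hc k, div_mul_cancel₀ _ hk]
    rw [hck]
    push_cast
    rw [smul_eq_mul, smul_eq_mul]
    field_simp
    ring
  set e : ℕ → ℝ := fun k => (k : ℝ) + 1 - m - ν with he_def
  have he_def' : ∀ k, e k = (k : ℝ) + 1 - m - ν := fun k => rfl
  have hν1' : (0:ℝ) < 1 - ν := by linarith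
  -- basic facts about exponents
  have heM : ∀ k, min ν (1 - ν) ≤ |e k| := by
    intro k
    rcases le_or_gt m k with h | h
    · have h1 : (m : ℝ) ≤ k := by exact_mod_cast h
      have h2 : (1 : ℝ) - ν ≤ e k := by rw [he_def']; linarith
      calc min ν (1-ν) ≤ 1 - ν := min_le_right _ _
        _ ≤ |e k| := le_trans h2 (le_abs_self _)
    · have h1 : (k : ℝ) + 1 ≤ m := by exact_mod_cast h
      have h2 : e k ≤ -ν := by rw [he_def']; linarith
      calc min ν (1-ν) ≤ ν := min_le_left _ _
        _ ≤ |e k| := by rw [abs_of_neg (by linarith : e k < 0)]; linarith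
  have hM0 : 0 < min ν (1 - ν) := lt_min hν0 hν1'
  have he_ne : ∀ k, e k ≠ 0 := by
    intro k h
    have := heM k
    rw [h, abs_zero] at this
    linarith
  have he_tail : ∀ k, m ≤ k → (1:ℝ) - ν ≤ e k := by
    intro k h
    have h1 : (m : ℝ) ≤ k := by exact_mod_cast h
    rw [he_def']; linarith
  -- geometric bound on coefficients
  have hgeo : Summable (fun k => |c k| * a ^ k) := by
    have h2 := (hsum (2 * a)).summable.tendsto_atTop_zero.norm
    simp only [norm_zero] at h2
    obtain ⟨C, hC⟩ := h2.bddAbove_range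
    rw [mem_upperBounds] at hC
    have hC' : ∀ k, |c k| * (2 * a) ^ k ≤ C := by
      intro k
      have h := hC _ ⟨k, rfl⟩
      simp only [Real.norm_eq_abs, abs_mul, abs_pow,
        abs_of_pos (by linarith : (0:ℝ) < 2*a)] at h
      exact h
    have hgs : Summable (fun k : ℕ => C * (1/2 : ℝ) ^ k) :=
      (summable_geometric_of_lt_one (by norm_num) (by norm_num)).mul_left C
    refine Summable.of_nonneg_of_le (fun k => by positivity) (fun k => ?_) hgs
    have heq : |c k| * a ^ k = |c k| * (2*a) ^ k * (1/2 : ℝ) ^ k := by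
      rw [mul_assoc, ← mul_pow]
      ring_nf
    rw [heq]
    exact mul_le_mul_of_nonneg_right (hC' k) (by positivity)
  have htail : Summable (fun j : ℕ => |c (j + m)| * a ^ j) := by
    have h1 : Summable (fun j : ℕ => |c (j + m)| * a ^ (j + m)) :=
      (summable_nat_add_iff m).mpr hgeo
    have h2 := h1.mul_left ((a ^ m)⁻¹)
    refine h2.congr (fun j => ?_)
    rw [pow_add]
    field_simp
  -- the summand of S is summable
  have hS : Summable (fun k : ℕ => c k * a ^ e k / e k) := by
    refine Summable.of_norm_bounded (g :=
      fun k => (a ^ ((1:ℝ) - m - ν) / min ν (1 - ν)) * (|c k| * a ^ k))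
      ((hgeo.mul_left _)) (fun k => ?_)
    rw [Real.norm_eq_abs, abs_div, abs_mul]
    have h1 : |a ^ e k| = a ^ ((1:ℝ) - m - ν) * a ^ k := by
      rw [abs_of_pos (Real.rpow_pos_of_pos ha _), he_def',
        (by push_cast; ring : (k : ℝ) + 1 - m - ν = (1 - (m:ℝ) - ν) + k), Real.rpow_add ha,
        Real.rpow_natCast]
    rw [h1, div_le_iff₀ (lt_of_lt_of_le hM0 (heM k))]
    have h3 : a ^ ((1:ℝ) - m - ν) / min ν (1-ν) * (|c k| * a ^ k) * |e k|
        = (a ^ ((1:ℝ) - m - ν) * (|c k| * a ^ k)) * (|e k| / min ν (1-ν)) := by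
      ring
    rw [h3]
    have h2 : (1:ℝ) ≤ |e k| / min ν (1-ν) := (one_le_div hM0).mpr (heM k)
    calc |c k| * (a ^ ((1:ℝ) - m - ν) * a ^ k)
        = a ^ ((1:ℝ) - m - ν) * (|c k| * a ^ k) * 1 := by ring
      _ ≤ a ^ ((1:ℝ) - m - ν) * (|c k| * a ^ k) * (|e k| / min ν (1-ν)) := by
          apply mul_le_mul_of_nonneg_left h2
          positivity
  -- key: the integral as a sum, for 0 < ε ≤ a
  have key : ∀ ε : ℝ, 0 < ε → ε ≤ a →
      HasSum (fun k : ℕ => c k * ((a ^ e k - ε ^ e k) / e k))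
        (∫ x in ε..a, f x / x ^ ((m : ℝ) + ν)) := by
    intro ε hε hεa
    set μ : Measure ℝ := volume.restrict (Ioc ε a) with hμ
    set G : ℕ → ℝ → ℝ := fun k x => c k * x ^ (e k - 1) with hG
    have hmem : (0:ℝ) ∉ uIcc ε a := by
      rw [Set.uIcc_of_le hεa]
      exact fun h => absurd h.1 (by linarith)
    have hGint : ∀ k, Integrable (G k) μ := by
      intro k
      have h1 : IntervalIntegrable (fun x : ℝ => x ^ (e k - 1)) volume ε a :=
        intervalIntegral.intervalIntegrable_rpow (Or.inr hmem)
      have h2 := h1.const_mul (c k)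
      rw [intervalIntegrable_iff_integrableOn_Ioc_of_le hεa] at h2
      exact h2
    have hrint : ∀ k, ∫ x in ε..a, x ^ (e k - 1) = (a ^ e k - ε ^ e k) / e k := by
      intro k
      rw [integral_rpow (Or.inr ⟨by simpa using fun h => he_ne k (by linarith), hmem⟩)]
      rw [sub_add_cancel]
    have hGval : ∀ k, ∫ x, G k x ∂μ = c k * ((a ^ e k - ε ^ e k) / e k) := by
      intro k
      rw [hμ, hG]
      rw [← intervalIntegral.integral_of_le hεa, intervalIntegral.integral_const_mul, hrint k]
    have hGnorm : ∀ k, ∫ x, ‖G k x‖ ∂μ = |c k| * ((a ^ e k - ε ^ e k) / e k) := by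
      intro k
      rw [hμ]
      rw [setIntegral_congr_fun measurableSet_Ioc
        (g := fun x => |c k| * x ^ (e k - 1)) (fun x hx => by
          simp only [hG, Real.norm_eq_abs, abs_mul,
            abs_of_pos (Real.rpow_pos_of_pos (lt_of_lt_of_le hε hx.1.le) _)])]
      rw [← intervalIntegral.integral_of_le hεa, intervalIntegral.integral_const_mul, hrint k]
    have hsummable : Summable (fun k => ∫ x, ‖G k x‖ ∂μ) := by
      simp only [hGnorm]
      rw [← summable_nat_add_iff m]
      have hbound : Summable (fun j : ℕ => (|c (j + m)| * a ^ j) * (a ^ ((1:ℝ) - ν) / (1 - ν))) :=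
        htail.mul_right _
      refine Summable.of_nonneg_of_le (fun j => ?_) (fun j => ?_) hbound
      · have hepos : 0 < e (j + m) := lt_of_lt_of_le hν1' (he_tail _ (Nat.le_add_left m j))
        have h4 : ε ^ e (j + m) ≤ a ^ e (j + m) :=
          Real.rpow_le_rpow hε.le hεa hepos.le
        exact mul_nonneg (abs_nonneg _) (div_nonneg (by linarith) hepos.le)
      · have hepos : (1:ℝ) - ν ≤ e (j + m) := he_tail _ (Nat.le_add_left m j)
        have hepos' : 0 < e (j + m) := lt_of_lt_of_le hν1' hepos
        have h1 : a ^ e (j + m) - ε ^ e (j + m) ≤ a ^ e (j + m) := by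
          have := Real.rpow_pos_of_pos hε (e (j + m))
          linarith
        have h2 : a ^ e (j + m) = a ^ (j:ℕ) * a ^ ((1:ℝ) - ν) := by
          rw [← Real.rpow_natCast a j, ← Real.rpow_add ha]
          congr 1
          rw [he_def']
          push_cast
          ring
        have h3 : (a ^ e (j+m) - ε ^ e (j+m)) / e (j+m) ≤ a ^ e (j+m) / (1 - ν) := by
          apply div_le_div₀ (by positivity) h1 hν1' hepos
        calc |c (j+m)| * ((a ^ e (j+m) - ε ^ e (j+m)) / e (j+m))
            ≤ |c (j+m)| * (a ^ e (j+m) / (1 - ν)) :=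
              mul_le_mul_of_nonneg_left h3 (abs_nonneg _)
          _ = |c (j+m)| * a ^ (j:ℕ) * (a ^ ((1:ℝ) - ν) / (1 - ν)) := by
              rw [h2]; ring
    have H := hasSum_integral_of_summable_integral_norm hGint hsummable
    simp only [hGval] at H
    have heq : ∫ x, (∑' k, G k x) ∂μ = ∫ x in ε..a, f x / x ^ ((m : ℝ) + ν) := by
      rw [intervalIntegral.integral_of_le hεa, hμ]
      refine setIntegral_congr_fun measurableSet_Ioc (fun x hx => ?_)
      have hx0 : 0 < x := lt_of_lt_of_le hε hx.1.le
      have hh := (hsum x).div_const (x ^ ((m : ℝ) + ν))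
      have hterm : ∀ k, G k x = c k * x ^ k / x ^ ((m : ℝ) + ν) := by
        intro k
        show c k * x ^ (e k - 1) = _
        rw [mul_div_assoc, ← Real.rpow_natCast x k, ← Real.rpow_sub hx0]
        congr 2
        rw [he_def']
        ring
      rw [tsum_congr hterm, hh.tsum_eq]
    rwa [heq] at H
  set S : ℝ := ∑' k, c k * a ^ e k / e k with hSdef
  refine ⟨S, hS.hasSum, ?_⟩
  set T : ℝ → ℝ := fun ε => ∑' j : ℕ, c (j + m) * ε ^ e (j + m) / e (j + m) with hTdef
  have hexpr : ∀ ε : ℝ, 0 < ε → ε ≤ a →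
      (∫ x in ε..a, f x / x ^ ((m : ℝ) + ν)) -
        ∑ k ∈ Finset.range m, c k * ε ^ e k / ((m : ℝ) + ν - k - 1)
      = S - T ε := by
    intro ε hε hεa
    have hw := key ε hε hεa
    have hv : Summable (fun k : ℕ => c k * ε ^ e k / e k) := by
      refine (hS.sub hw.summable).congr (fun k => ?_)
      field_simp
      ring
    have hsplit := Summable.sum_add_tsum_nat_add m hv
    have htsub : (∫ x in ε..a, f x / x ^ ((m : ℝ) + ν))
        = S - ∑' k, c k * ε ^ e k / e k := by
      rw [hSdef, ← hw.tsum_eq, ← Summable.tsum_sub hS hv]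
      refine tsum_congr (fun k => ?_)
      field_simp
    have hneg : ∑ k ∈ Finset.range m, c k * ε ^ e k / ((m : ℝ) + ν - k - 1)
        = -∑ k ∈ Finset.range m, c k * ε ^ e k / e k := by
      rw [← Finset.sum_neg_distrib]
      refine Finset.sum_congr rfl (fun k _ => ?_)
      have h1 : (m : ℝ) + ν - k - 1 = -(e k) := by rw [he_def']; ring
      rw [h1, div_neg]
    rw [htsub, hneg, hTdef]
    linarith [hsplit]
  have hT0 : Tendsto T (nhdsWithin 0 (Set.Ioi 0)) (nhds 0) := by
    set D : ℝ := ∑' j : ℕ, |c (j + m)| * a ^ j with hD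
    have hg : Tendsto (fun ε : ℝ => D * (ε ^ ((1:ℝ) - ν) / (1 - ν)))
        (nhdsWithin 0 (Set.Ioi 0)) (nhds 0) := by
      have h1 : Tendsto (fun ε : ℝ => ε ^ ((1:ℝ) - ν)) (nhds 0) (nhds 0) := by
        have := (Real.continuousAt_rpow_const 0 ((1:ℝ) - ν) (Or.inr hν1'.le)).tendsto
        rwa [Real.zero_rpow (ne_of_gt hν1')] at this
      have h2 := ((h1.mono_left (nhdsWithin_le_nhds (s := Set.Ioi 0))).div_const
        (1 - ν)).const_mul D
      simpa using h2
    refine squeeze_zero_norm' ?_ hg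
    filter_upwards [self_mem_nhdsWithin,
      mem_nhdsWithin_of_mem_nhds (Iio_mem_nhds ha)] with ε (hε : 0 < ε) (hεa : ε < a)
    have hbs : Summable (fun j : ℕ => (|c (j + m)| * a ^ j) * (ε ^ ((1:ℝ) - ν) / (1 - ν))) :=
      htail.mul_right _
    have hb : ∀ j : ℕ, ‖c (j + m) * ε ^ e (j + m) / e (j + m)‖
        ≤ (|c (j + m)| * a ^ j) * (ε ^ ((1:ℝ) - ν) / (1 - ν)) := by
      intro j
      have hepos : (1:ℝ) - ν ≤ e (j + m) := he_tail _ (Nat.le_add_left m j)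
      have hepos' : 0 < e (j + m) := lt_of_lt_of_le hν1' hepos
      have h2 : ε ^ e (j + m) = ε ^ (j:ℕ) * ε ^ ((1:ℝ) - ν) := by
        rw [← Real.rpow_natCast ε j, ← Real.rpow_add hε]
        congr 1
        rw [he_def']
        push_cast
        ring
      have h4 : (|c (j + m)| * a ^ j) * (ε ^ ((1:ℝ) - ν) / (1 - ν))
          = |c (j + m)| * (a ^ j * ε ^ ((1:ℝ) - ν)) / (1 - ν) := by ring
      rw [Real.norm_eq_abs, abs_div, abs_mul, abs_of_pos (Real.rpow_pos_of_pos hε _),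
        abs_of_pos hepos', h2, h4]
      gcongr
    have hsn : Summable (fun j : ℕ => ‖c (j + m) * ε ^ e (j + m) / e (j + m)‖) :=
      Summable.of_nonneg_of_le (fun j => norm_nonneg _) hb hbs
    calc ‖T ε‖
        ≤ ∑' j : ℕ, ‖c (j + m) * ε ^ e (j + m) / e (j + m)‖ := norm_tsum_le_tsum_norm hsn
      _ ≤ ∑' j : ℕ, (|c (j + m)| * a ^ j) * (ε ^ ((1:ℝ) - ν) / (1 - ν)) :=
          Summable.tsum_le_tsum hb hsn hbs
      _ = D * (ε ^ ((1:ℝ) - ν) / (1 - ν)) := tsum_mul_right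
  have hfin : Tendsto (fun ε => S - T ε) (nhdsWithin 0 (Set.Ioi 0)) (nhds S) := by
    have := (tendsto_const_nhds (x := S) (f := nhdsWithin (0:ℝ) (Set.Ioi 0))).sub hT0
    simpa using this
  refine hfin.congr' ?_
  filter_upwards [self_mem_nhdsWithin,
    mem_nhdsWithin_of_mem_nhds (Iio_mem_nhds ha)] with ε (h1 : 0 < ε) (h2 : ε < a)
  exact (hexpr ε h1 h2.le).symm
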